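/- arXiv:2601.18041 — 2 statements merged into one kernel-verified Lean document; each statement's English description precedes it below -/
import Mathlib

section
/- Grassmannian intertwining property: Let Ω be an nc set over Gr^{(d;m)}(A) and f : Ω → M(B) a graded function. Then f is nc (i.e. direct-sum-preserving and similarity-preserving) if and only if f satisfies: for all n, n' ≥ 1, T ∈ M_{n,n'}(R), σ ∈ Ω_n, σ' ∈ Ω_{n'}, whenever [[I_n, T],[0, I_{n'}]] · (σ ⊕ σ') = σ ⊕ σ', one has f(σ)T = Tf(σ'). -/
open Matrix

/-- `n × n` matrices over `A`. -/
abbrev Mat (A : Type) (n : ℕ) : Type := Matrix (Fin n) (Fin n) A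

/-- `m × m` block matrices with `n × n` blocks over `A`, i.e. `M_m(M_n(A))`. -/
abbrev BMat (A : Type) (m n : ℕ) : Type := Matrix (Fin m) (Fin m) (Mat A n)

section NC

variable {R : Type} [CommRing R] {A : Type} [Ring A]

/-- Membership in the subgroup `H^{(d;m)}_n(A)` of invertible block lower-triangular
matrices `[[X,0],[Y,Z]]` with `X ∈ GL_{m-d}`, `Z ∈ GL_d`. -/
def memH (m d n : ℕ) (hd : d ≤ m) (Γ : BMat A m n) : Prop :=
  IsUnit Γ ∧
  (∀ i j : Fin m, (i : ℕ) < m - d → m - d ≤ (j : ℕ) → Γ i j = 0) ∧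
  IsUnit (Matrix.of fun i j : Fin (m - d) =>
    Γ ⟨(i : ℕ), lt_of_lt_of_le i.isLt (Nat.sub_le m d)⟩
      ⟨(j : ℕ), lt_of_lt_of_le j.isLt (Nat.sub_le m d)⟩) ∧
  IsUnit (Matrix.of fun i j : Fin d =>
    Γ ⟨m - d + (i : ℕ), by have := i.isLt; omega⟩
      ⟨m - d + (j : ℕ), by have := j.isLt; omega⟩)

/-- The relation `X ~ Y` iff `X = Y Γ` for some `Γ ∈ H^{(d;m)}_n(A)`. -/
def grel (m d n : ℕ) (hd : d ≤ m) (X Y : BMat A m n) : Prop :=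
  ∃ Γ : BMat A m n, memH m d n hd Γ ∧ X = Y * Γ

/-- Direct sum of square matrices. -/
def dsumMat {n n' : ℕ} (X : Mat A n) (Y : Mat A n') : Mat A (n + n') :=
  Matrix.reindex finSumFinEquiv finSumFinEquiv (Matrix.fromBlocks X 0 0 Y)

/-- Entrywise block direct sum `X ⊕̃ Y` of elements of `M_m(M_n(A))`, `M_m(M_{n'}(A))`. -/
def dsum {m n n' : ℕ} (X : BMat A m n) (Y : BMat A m n') : BMat A m (n + n') :=
  Matrix.of fun i j => dsumMat (X i j) (Y i j)

/-- Direct sum of square matrices with entries in a module. -/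
def dsumW {W : Type} [AddCommMonoid W] {n n' : ℕ}
    (X : Matrix (Fin n) (Fin n) W) (Y : Matrix (Fin n') (Fin n') W) :
    Matrix (Fin (n + n')) (Fin (n + n')) W :=
  Matrix.reindex finSumFinEquiv finSumFinEquiv (Matrix.fromBlocks X 0 0 Y)

/-- Block upper triangular matrix `[[P, H],[0, Q]]`. -/
def triW {W : Type} [AddCommMonoid W] {n n' : ℕ}
    (P : Matrix (Fin n) (Fin n) W) (H : Matrix (Fin n) (Fin n') W)
    (Q : Matrix (Fin n') (Fin n') W) :
    Matrix (Fin (n + n')) (Fin (n + n')) W :=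
  Matrix.reindex finSumFinEquiv finSumFinEquiv (Matrix.fromBlocks P H 0 Q)

/-- The unipotent upper triangular matrix `[[I, T],[0, I]]` over `R`. -/
def uptri (R : Type) [CommRing R] {p q : ℕ} (T : Matrix (Fin p) (Fin q) R) :
    Matrix (Fin (p + q)) (Fin (p + q)) R :=
  Matrix.reindex finSumFinEquiv finSumFinEquiv (Matrix.fromBlocks 1 T 0 1)

/-- Left multiplication of a representative by `s^{⊕ m}` for a scalar matrix `s` over `R`:
the similarity action on the nc Grassmannian. -/
def simAct [Algebra R A] {m N : ℕ} (s : Matrix (Fin N) (Fin N) R) (X : BMat A m N) :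
    BMat A m N :=
  Matrix.of fun i j => s.map (algebraMap R A) * X i j

/-- Multiplication of a matrix over an `R`-module `W` by a matrix over `R` on the left. -/
def rmulL {W : Type} [AddCommMonoid W] [Module R W] {p q r : ℕ}
    (s : Matrix (Fin p) (Fin q) R) (X : Matrix (Fin q) (Fin r) W) :
    Matrix (Fin p) (Fin r) W :=
  Matrix.of fun i j => ∑ k, s i k • X k j

/-- Multiplication of a matrix over an `R`-module `W` by a matrix over `R` on the right. -/
def rmulR {W : Type} [AddCommMonoid W] [Module R W] {p q r : ℕ}
    (X : Matrix (Fin p) (Fin q) W) (s : Matrix (Fin q) (Fin r) R) :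
    Matrix (Fin p) (Fin r) W :=
  Matrix.of fun i j => ∑ k, s k j • X i k

/-- Vertical concatenation of matrices. -/
def vcat {α : Type} {p p' q : ℕ} (X : Matrix (Fin p) (Fin q) α)
    (Y : Matrix (Fin p') (Fin q) α) : Matrix (Fin (p + p')) (Fin q) α :=
  Matrix.of fun i j =>
    if h : (i : ℕ) < p then X ⟨(i : ℕ), h⟩ j
    else Y ⟨(i : ℕ) - p, by have := i.isLt; omega⟩ j

/-- The affine embedding `X ↦ [[0, I],[I, X]]` in the case `(d;m) = (1;2)`. -/
def affEmb {n : ℕ} (X : Mat A n) : BMat A 2 n := !![0, 1; 1, X]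

/-- The matrix `[[0, X],[0, 0]] ∈ M_{n+n'}(A)` with `X ∈ M_{n,n'}(A)` in the upper right
corner. -/
def cornerMat {n n' : ℕ} (X : Matrix (Fin n) (Fin n') A) : Mat A (n + n') :=
  Matrix.reindex finSumFinEquiv finSumFinEquiv (Matrix.fromBlocks 0 X 0 0)

/-- The representative `(P;Q)_{u,v}(X)` of the element `(σ;σ')_{u,v}(X)`:
`P ⊕̃ Q + Σ_{j=1}^d [[0, X Q_{v, m-d+j}],[0,0]] ⊗ e^{(m)}_{d+u, m-d+j}`. -/
def ins {m d n n' : ℕ} (hd : d ≤ m) (u : Fin (m - d)) (v : Fin d)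
    (P : BMat A m n) (Q : BMat A m n') (X : Matrix (Fin n) (Fin n') A) :
    BMat A m (n + n') :=
  dsum P Q + Matrix.of fun (i j : Fin m) =>
    if (i : ℕ) = d + (u : ℕ) ∧ m - d ≤ (j : ℕ) then
      cornerMat (X * Q ⟨(v : ℕ), lt_of_lt_of_le v.isLt hd⟩ j)
    else 0

/-- The matrix unit `e^{(md,d)}_{u,v} ⊗ X`. -/
def eMat {md d : ℕ} {n : ℕ} (u : Fin md) (v : Fin d) (X : Mat A n) :
    Matrix (Fin md) (Fin d) (Mat A n) :=
  Matrix.of fun i j => if i = u ∧ j = v then X else 0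

/-- The block matrix `[[I_d ⊗ I_n, 0],[-Y, I_{m-d} ⊗ I_n]]` used to define `σ(Y)`. -/
def shiftMat {m d n : ℕ} (hd : d ≤ m) (Y : Matrix (Fin (m - d)) (Fin d) (Mat A n)) :
    BMat A m n :=
  Matrix.of fun i j =>
    (if i = j then (1 : Mat A n) else 0) +
    (if h : d ≤ (i : ℕ) ∧ (j : ℕ) < d then
      -Y ⟨(i : ℕ) - d, by have := i.isLt; omega⟩ ⟨(j : ℕ), h.2⟩
    else 0)

/-- A family `C` of sets of representatives is an nc set over `Gr^{(d;m)}(A)`: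
it consists of invertible matrices, is saturated under the relation `~`
(i.e. it is a set of equivalence classes), and is closed under direct sums. -/
def IsNCSetCarrier {m d : ℕ} (hd : d ≤ m) (C : ∀ n, Set (BMat A m n)) : Prop :=
  (∀ n, ∀ a ∈ C n, IsUnit a) ∧
  (∀ n, ∀ a b : BMat A m n, grel m d n hd a b → (a ∈ C n ↔ b ∈ C n)) ∧
  (∀ n n', ∀ a ∈ C n, ∀ b ∈ C n', dsum a b ∈ C (n + n'))

/-- `f` is an nc function on the nc set (with carrier) `C` over `Gr^{(d;m)}(A)`:
it descends to equivalence classes, preserves direct sums, and is similarity preserving. -/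
def IsNCFun (R : Type) [CommRing R] [Algebra R A] {W : Type} [AddCommMonoid W] [Module R W]
    {m d : ℕ} (hd : d ≤ m) (C : ∀ n, Set (BMat A m n))
    (f : ∀ n, BMat A m n → Matrix (Fin n) (Fin n) W) : Prop :=
  (∀ n, ∀ a ∈ C n, ∀ b ∈ C n, grel m d n hd a b → f n a = f n b) ∧
  (∀ n n', ∀ a ∈ C n, ∀ b ∈ C n', f (n + n') (dsum a b) = dsumW (f n a) (f n' b)) ∧
  (∀ n (s : (Matrix (Fin n) (Fin n) R)ˣ), ∀ a ∈ C n,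
    simAct (s : Matrix (Fin n) (Fin n) R) a ∈ C n →
    f n (simAct (s : Matrix (Fin n) (Fin n) R) a) =
      rmulR (rmulL (s : Matrix (Fin n) (Fin n) R) (f n a))
        ((s⁻¹ : (Matrix (Fin n) (Fin n) R)ˣ) : Matrix (Fin n) (Fin n) R))

/-- `(u,v)`-admissibility of an nc set. -/
def Admissible (R : Type) [CommRing R] [Algebra R A] {m d : ℕ} (hd : d ≤ m)
    (C : ∀ n, Set (BMat A m n)) (u : Fin (m - d)) (v : Fin d) : Prop :=
  ∀ n n' (a : BMat A m n) (b : BMat A m n') (X : Matrix (Fin n) (Fin n') A),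
    a ∈ C n → b ∈ C n' →
    ∃ r : Rˣ, ins hd u v a b ((r : R) • X) ∈ C (n + n')

/-- The similarity-invariant envelope of an nc set. -/
def envC (R : Type) [CommRing R] [Algebra R A] {m d : ℕ} (hd : d ≤ m)
    (C : ∀ n, Set (BMat A m n)) : ∀ n, Set (BMat A m n) :=
  fun n => {x | ∃ (s : (Matrix (Fin n) (Fin n) R)ˣ) (a : BMat A m n),
    a ∈ C n ∧ grel m d n hd x (simAct (s : Matrix (Fin n) (Fin n) R) a)}

end NC

section Res

variable {R : Type} [CommRing R] {A : Type} [Ring A] [Algebra R A]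

/-- Entrywise inclusion `M_m(M_n(B)) → M_m(M_n(A))` for a subalgebra `B ⊆ A`. -/
def bmap (D : Subalgebra R A) {m n : ℕ} (b : BMat (↥D) m n) : BMat A m n :=
  Matrix.of fun i j => (b i j).map (fun x => (x : A))

/-- Entrywise inclusion for rectangular matrices over a subalgebra. -/
def rcmap (D : Subalgebra R A) {n n' : ℕ} (X : Matrix (Fin n) (Fin n') ↥D) :
    Matrix (Fin n) (Fin n') A :=
  X.map (fun x => (x : A))

/-- `X` is invertible in `M_m(M_n(B))` for the subalgebra `B = D ⊆ A`. -/
def invIn (D : Subalgebra R A) {m n : ℕ} (X : BMat A m n) : Prop :=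
  (∀ i j k l, X i j k l ∈ D) ∧
  ∃ Y : BMat A m n, (∀ i j k l, Y i j k l ∈ D) ∧ X * Y = 1 ∧ Y * X = 1

/-- The amplification `a^{⊕̃ n}` of an element `a ∈ M_m(A) = M_m(M_1(A))`. -/
def ampl {m : ℕ} (a : BMat A m 1) (n : ℕ) : BMat A m n :=
  Matrix.of fun i j => Matrix.diagonal (fun _ => a i j 0 0)

/-- The matrix `r^{(d;m)}(P;Q)`: first `m-d` block columns are the last `m-d` block
columns of `P`, last `d` block columns are the last `d` block columns of `Q`. -/
def rmat {m d n : ℕ} (hd : d ≤ m) (P Q : BMat A m n) : BMat A m n :=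
  Matrix.of fun i j =>
    if h : (j : ℕ) < m - d then P i ⟨d + (j : ℕ), by omega⟩ else Q i j

/-- The value `[B_{v,m-d+1},…,B_{v,m}] ⋅ ζ_u` of the `(d;m)`-Grassmannian resolvent,
where `ζ_u` is the `u`-th bottom block column of the inverse `Rinv` of an `r`-matrix. -/
def resVal {m d n : ℕ} (hd : d ≤ m) (v : Fin d) (u : Fin (m - d))
    (Bm Rinv : BMat A m n) : Mat A n :=
  ∑ j : Fin d,
    Bm ⟨(v : ℕ), lt_of_lt_of_le v.isLt hd⟩ ⟨m - d + (j : ℕ), by have := j.isLt; omega⟩ *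
    Rinv ⟨m - d + (j : ℕ), by have := j.isLt; omega⟩ ⟨d + (u : ℕ), by have := u.isLt; omega⟩

/-- Membership in the `(d;m)`-Grassmannian `B`-resolvent set of `π` (represented by `p`):
`b` represents an element of `Gr^{(d;m)}_n(B)` such that `π^{⊕n}` and `b` are
transversal in `A`. -/
def ResMem {m d : ℕ} (hd : d ≤ m) (p : BMat A m 1) (D : Subalgebra R A) {n : ℕ}
    (b : BMat (↥D) m n) : Prop :=
  IsUnit b ∧ IsUnit (rmat hd (ampl p n) (bmap D b))

end Res


section GIHelpers

open Matrix

variable {R : Type} [CommRing R] {A : Type} [Ring A] [Algebra R A]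
variable {W : Type} [AddCommMonoid W] [Module R W]

lemma gi_uptri_eq {p q : ℕ} (T : Matrix (Fin p) (Fin q) R) :
    uptri R T = (Matrix.fromBlocks 1 T 0 1).submatrix finSumFinEquiv.symm finSumFinEquiv.symm := by
  rw [uptri, Matrix.reindex_apply]

lemma gi_uptri_mul {p q : ℕ} (T T' : Matrix (Fin p) (Fin q) R) :
    uptri R T * uptri R T' = uptri R (T + T') := by
  rw [gi_uptri_eq, gi_uptri_eq, gi_uptri_eq, Matrix.submatrix_mul_equiv,
    Matrix.fromBlocks_multiply]
  simp [add_comm]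

lemma gi_uptri_zero {p q : ℕ} : uptri R (0 : Matrix (Fin p) (Fin q) R) = 1 := by
  rw [gi_uptri_eq]
  simp [Matrix.fromBlocks_one]

lemma gi_isUnit_uptri {p q : ℕ} (T : Matrix (Fin p) (Fin q) R) : IsUnit (uptri R T) :=
  ⟨⟨uptri R T, uptri R (-T), by rw [gi_uptri_mul]; simp [gi_uptri_zero],
    by rw [gi_uptri_mul]; simp [gi_uptri_zero]⟩, rfl⟩

lemma gi_uptri_map {p q : ℕ} (T : Matrix (Fin p) (Fin q) R) :
    (uptri R T).map (algebraMap R A) =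
      (Matrix.fromBlocks 1 (T.map (algebraMap R A)) 0 1).submatrix
        finSumFinEquiv.symm finSumFinEquiv.symm := by
  rw [gi_uptri_eq, ← Matrix.submatrix_map, Matrix.fromBlocks_map]
  simp [Matrix.map_one]

lemma gi_isUnit_map {p : ℕ} {M : Matrix (Fin p) (Fin p) R} (h : IsUnit M) :
    IsUnit (M.map (algebraMap R A)) := by
  simpa [RingHom.mapMatrix_apply] using h.map (algebraMap R A).mapMatrix

lemma gi_rmulR_one {p q : ℕ} (X : Matrix (Fin p) (Fin q) W) :
    rmulR (R := R) X (1 : Matrix (Fin q) (Fin q) R) = X := by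
  ext i j
  simp [rmulR, Matrix.one_apply]

lemma gi_rmulR_rmulR {p q r t : ℕ} (X : Matrix (Fin p) (Fin q) W)
    (s : Matrix (Fin q) (Fin r) R) (s' : Matrix (Fin r) (Fin t) R) :
    rmulR (rmulR X s) s' = rmulR X (s * s') := by
  ext i j
  simp only [rmulR, Matrix.of_apply, Matrix.mul_apply, Finset.smul_sum, smul_smul,
    Finset.sum_smul]
  rw [Finset.sum_comm]
  refine Finset.sum_congr rfl fun k _ => Finset.sum_congr rfl fun l _ => ?_
  rw [mul_comm]

lemma gi_isUnit_diagonal {N p : ℕ} {c : Mat A N} (hc : IsUnit c) :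
    IsUnit (Matrix.diagonal (fun _ : Fin p => c)) := by
  obtain ⟨u, rfl⟩ := hc
  have e1 : (fun _ : Fin p => u.val * u.inv) = fun _ => (1 : Mat A N) :=
    funext fun _ => u.val_inv
  have e2 : (fun _ : Fin p => u.inv * u.val) = fun _ => (1 : Mat A N) :=
    funext fun _ => u.inv_val
  have h1 : Matrix.diagonal (fun _ : Fin p => u.val) *
      Matrix.diagonal (fun _ : Fin p => u.inv) = 1 := by
    rw [Matrix.diagonal_mul_diagonal, e1, Matrix.diagonal_one]
  have h2 : Matrix.diagonal (fun _ : Fin p => u.inv) *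
      Matrix.diagonal (fun _ : Fin p => u.val) = 1 := by
    rw [Matrix.diagonal_mul_diagonal, e2, Matrix.diagonal_one]
  exact ⟨⟨_, _, h1, h2⟩, rfl⟩

lemma gi_isUnit_entry {N p : ℕ} (M : Matrix (Fin p) (Fin p) (Mat A N)) {c : Mat A N}
    (hc : IsUnit c) (hM : ∀ i j, M i j = if i = j then c else 0) : IsUnit M := by
  have : M = Matrix.diagonal (fun _ : Fin p => c) := by
    ext i j
    rw [hM, Matrix.diagonal_apply]
  rw [this]
  exact gi_isUnit_diagonal hc

lemma gi_memH_diagonal {m d N : ℕ} (hd : d ≤ m) {c : Mat A N} (hc : IsUnit c) :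
    memH m d N hd (Matrix.diagonal (fun _ : Fin m => c)) := by
  refine ⟨gi_isUnit_diagonal hc, ?_, ?_, ?_⟩
  · intro i j hi hj
    apply Matrix.diagonal_apply_ne
    intro h
    rw [h] at hi
    omega
  · apply gi_isUnit_entry _ hc
    intro i j
    simp [Matrix.diagonal_apply, Fin.ext_iff]
  · apply gi_isUnit_entry _ hc
    intro i j
    simp [Matrix.diagonal_apply, Fin.ext_iff]

lemma gi_grel_simAct {m d N : ℕ} (hd : d ≤ m) (t : Matrix (Fin N) (Fin N) R)
    (Y : BMat A m N) (c : Mat A N) (hc : IsUnit c)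
    (h : ∀ i j, t.map (algebraMap R A) * Y i j = Y i j * c) :
    grel m d N hd (simAct t Y) Y := by
  refine ⟨Matrix.diagonal (fun _ : Fin m => c), gi_memH_diagonal hd hc, ?_⟩
  exact Matrix.ext fun i j => by rw [Matrix.mul_diagonal]; exact h i j

lemma gi_dsumMat_eq {n n' : ℕ} (X : Mat A n) (Y : Mat A n') :
    dsumMat X Y =
      (Matrix.fromBlocks X 0 0 Y).submatrix finSumFinEquiv.symm finSumFinEquiv.symm := by
  rw [dsumMat, Matrix.reindex_apply]

lemma gi_mul_submatrix_col {α : Type} [NonUnitalNonAssocSemiring α] {p q r r' : Type}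
    [Fintype q] (M : Matrix p q α) (N : Matrix q r α) (g : r' → r) :
    M * N.submatrix id g = (M * N).submatrix id g := by
  ext i j
  simp [Matrix.mul_apply]

lemma gi_submatrix_row_mul {α : Type} [NonUnitalNonAssocSemiring α] {p p' q r : Type}
    [Fintype r] (M : Matrix q r α) (N : Matrix r p' α) (g : p → q) :
    M.submatrix g id * N = (M * N).submatrix g id := by
  ext i j
  simp [Matrix.mul_apply]

lemma gi_fromCols_map_one_zero {n n' : ℕ} :
    (Matrix.fromCols (1 : Matrix (Fin n) (Fin n) R)
        (0 : Matrix (Fin n) (Fin n') R)).map (algebraMap R A) =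
      Matrix.fromCols 1 0 := by
  ext i (j | j) <;>
    simp [Matrix.fromCols_apply_inl, Matrix.fromCols_apply_inr, Matrix.one_apply, apply_ite (algebraMap R A)]

lemma gi_fromRows_map_10 {n n' : ℕ} :
    (Matrix.fromRows (1 : Matrix (Fin n) (Fin n) R)
        (0 : Matrix (Fin n') (Fin n) R)).map (algebraMap R A) =
      Matrix.fromRows 1 0 := by
  ext (i | i) j <;>
    simp [Matrix.fromRows_apply_inl, Matrix.fromRows_apply_inr, Matrix.one_apply, apply_ite (algebraMap R A)]

lemma gi_fromRows_map_01 {n n' : ℕ} :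
    (Matrix.fromRows (0 : Matrix (Fin n) (Fin n') R)
        (1 : Matrix (Fin n') (Fin n') R)).map (algebraMap R A) =
      Matrix.fromRows 0 1 := by
  ext (i | i) j <;>
    simp [Matrix.fromRows_apply_inl, Matrix.fromRows_apply_inr, Matrix.one_apply, apply_ite (algebraMap R A)]

lemma gi_comm_T1 {n n' : ℕ} (P : Mat A n) (Q : Mat A n') :
    ((Matrix.fromCols (1 : Matrix (Fin n) (Fin n) R)
        (0 : Matrix (Fin n) (Fin n') R)).submatrix id finSumFinEquiv.symm).map
          (algebraMap R A) * dsumMat P Q =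
      P * ((Matrix.fromCols (1 : Matrix (Fin n) (Fin n) R)
        (0 : Matrix (Fin n) (Fin n') R)).submatrix id finSumFinEquiv.symm).map
          (algebraMap R A) := by
  rw [← Matrix.submatrix_map, gi_fromCols_map_one_zero, gi_dsumMat_eq,
    Matrix.submatrix_mul_equiv, Matrix.fromCols_mul_fromBlocks, gi_mul_submatrix_col]
  simp [Matrix.mul_fromCols]

lemma gi_comm_T2 {n n' : ℕ} (P : Mat A n) (Q : Mat A n') :
    ((Matrix.fromRows (0 : Matrix (Fin n) (Fin n') R)
        (1 : Matrix (Fin n') (Fin n') R)).submatrix finSumFinEquiv.symm id).map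
          (algebraMap R A) * Q =
      dsumMat P Q * ((Matrix.fromRows (0 : Matrix (Fin n) (Fin n') R)
        (1 : Matrix (Fin n') (Fin n') R)).submatrix finSumFinEquiv.symm id).map
          (algebraMap R A) := by
  rw [← Matrix.submatrix_map, gi_fromRows_map_01, gi_dsumMat_eq, gi_submatrix_row_mul,
    Matrix.submatrix_mul_equiv, Matrix.fromRows_mul, Matrix.fromBlocks_mul_fromRows]
  simp

lemma gi_comm_T3 {n n' : ℕ} (P : Mat A n) (Q : Mat A n') :
    ((Matrix.fromRows (1 : Matrix (Fin n) (Fin n) R)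
        (0 : Matrix (Fin n') (Fin n) R)).submatrix finSumFinEquiv.symm id).map
          (algebraMap R A) * P =
      dsumMat P Q * ((Matrix.fromRows (1 : Matrix (Fin n) (Fin n) R)
        (0 : Matrix (Fin n') (Fin n) R)).submatrix finSumFinEquiv.symm id).map
          (algebraMap R A) := by
  rw [← Matrix.submatrix_map, gi_fromRows_map_10, gi_dsumMat_eq, gi_submatrix_row_mul,
    Matrix.submatrix_mul_equiv, Matrix.fromRows_mul, Matrix.fromBlocks_mul_fromRows]
  simp

lemma gi_uptri_comm {m n n' : ℕ} (T : Matrix (Fin n) (Fin n') R)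
    (a : BMat A m n) (b : BMat A m n')
    (h : ∀ i j, T.map (algebraMap R A) * b i j = a i j * T.map (algebraMap R A)) :
    ∀ i j, (uptri R T).map (algebraMap R A) * (dsum a b) i j =
      (dsum a b) i j * (uptri R T).map (algebraMap R A) := by
  intro i j
  have hdd : (dsum a b) i j = dsumMat (a i j) (b i j) := rfl
  rw [hdd, gi_uptri_map, gi_dsumMat_eq, Matrix.submatrix_mul_equiv,
    Matrix.submatrix_mul_equiv, Matrix.fromBlocks_multiply, Matrix.fromBlocks_multiply]
  simp [h i j]

lemma gi_comm_sim {m n : ℕ} (s : Matrix (Fin n) (Fin n) R) (a : BMat A m n) :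
    ∀ i j, (uptri R s).map (algebraMap R A) * (dsum (simAct s a) a) i j =
      (dsum (simAct s a) a) i j *
        (uptri R (1 : Matrix (Fin n) (Fin n) R)).map (algebraMap R A) := by
  intro i j
  have hdd : (dsum (simAct s a) a) i j =
      dsumMat (s.map (algebraMap R A) * a i j) (a i j) := rfl
  rw [hdd, gi_uptri_map, gi_uptri_map, gi_dsumMat_eq, Matrix.submatrix_mul_equiv,
    Matrix.submatrix_mul_equiv, Matrix.fromBlocks_multiply, Matrix.fromBlocks_multiply]
  simp [Matrix.map_one]

lemma gi_sum_split {M : Type} [AddCommMonoid M] {n n' : ℕ} (g : Fin (n + n') → M) :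
    ∑ k, g k = (∑ k : Fin n, g (finSumFinEquiv (Sum.inl k))) +
      ∑ k : Fin n', g (finSumFinEquiv (Sum.inr k)) := by
  rw [← Equiv.sum_comp finSumFinEquiv g, Fintype.sum_sum_type]

lemma gi_dsumW_apply {n n' : ℕ} (P : Matrix (Fin n) (Fin n) W)
    (Q : Matrix (Fin n') (Fin n') W) (x y : Fin n ⊕ Fin n') :
    dsumW P Q (finSumFinEquiv x) (finSumFinEquiv y) = Matrix.fromBlocks P 0 0 Q x y := by
  rw [dsumW, Matrix.reindex_apply]
  simp

lemma gi_uptri_apply {p q : ℕ} (T : Matrix (Fin p) (Fin q) R) (x y : Fin p ⊕ Fin q) :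
    uptri R T (finSumFinEquiv x) (finSumFinEquiv y) = Matrix.fromBlocks 1 T 0 1 x y := by
  rw [gi_uptri_eq]
  simp


lemma gi_colsub_apply {n n' : ℕ} (M : Matrix (Fin n) (Fin n ⊕ Fin n') R)
    (i : Fin n) (x : Fin n ⊕ Fin n') :
    (M.submatrix id finSumFinEquiv.symm) i (finSumFinEquiv x) = M i x := by
  simp

lemma gi_rowsub_apply {n n' p : ℕ} (M : Matrix (Fin n ⊕ Fin n') (Fin p) R)
    (x : Fin n ⊕ Fin n') (j : Fin p) :
    (M.submatrix finSumFinEquiv.symm id) (finSumFinEquiv x) j = M x j := by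
  simp

end GIHelpers

/-- Grassmannian intertwining property. -/
theorem grassmann_intertwining {R : Type} [CommRing R] {A : Type} [Ring A] [Algebra R A]
    {W : Type} [AddCommMonoid W] [Module R W]
    (m d : ℕ) (hd1 : 1 ≤ d) (hd : d ≤ m)
    (C : ∀ n, Set (BMat A m n)) (hC : IsNCSetCarrier hd C)
    (f : ∀ n, BMat A m n → Matrix (Fin n) (Fin n) W)
    (hresp : ∀ n, ∀ a ∈ C n, ∀ b ∈ C n, grel m d n hd a b → f n a = f n b) :
    IsNCFun R hd C f ↔
      (∀ n n' (T : Matrix (Fin n) (Fin n') R), ∀ a ∈ C n, ∀ b ∈ C n',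
        grel m d (n + n') hd (simAct (uptri R T) (dsum a b)) (dsum a b) →
        rmulR (f n a) T = rmulL T (f n' b)) := by
  constructor
  · rintro ⟨h1, h2, h3⟩ n n' T a ha b hb hg
    have hXmem : dsum a b ∈ C (n + n') := hC.2.2 n n' a ha b hb
    have hsX : simAct (uptri R T) (dsum a b) ∈ C (n + n') :=
      (hC.2.1 _ _ _ hg).2 hXmem
    have hinv1 : uptri R T * uptri R (-T) = 1 := by
      rw [gi_uptri_mul]
      simp [gi_uptri_zero]
    have hinv2 : uptri R (-T) * uptri R T = 1 := by
      rw [gi_uptri_mul]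
      simp [gi_uptri_zero]
    have h3' : f (n + n') (simAct (uptri R T) (dsum a b)) =
        rmulR (rmulL (uptri R T) (f (n + n') (dsum a b))) (uptri R (-T)) :=
      h3 (n + n') ⟨uptri R T, uptri R (-T), hinv1, hinv2⟩ (dsum a b) hXmem hsX
    have hval : f (n + n') (simAct (uptri R T) (dsum a b)) = f (n + n') (dsum a b) :=
      hresp _ _ hsX _ hXmem hg
    have e1 : rmulR (rmulL (uptri R T) (f (n + n') (dsum a b))) (uptri R (-T)) =
        f (n + n') (dsum a b) := h3'.symm.trans hval
    have key : rmulR (f (n + n') (dsum a b)) (uptri R T) =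
        rmulL (uptri R T) (f (n + n') (dsum a b)) := by
      conv_lhs => rw [← e1]
      rw [gi_rmulR_rmulR, gi_uptri_mul]
      simp [gi_uptri_zero, gi_rmulR_one]
    rw [h2 n n' a ha b hb] at key
    ext i j
    have h := congrFun (congrFun key (finSumFinEquiv (Sum.inl i)))
      (finSumFinEquiv (Sum.inr j))
    simp only [rmulR, rmulL, Matrix.of_apply] at h ⊢
    rw [gi_sum_split, gi_sum_split] at h
    simp only [gi_uptri_apply, gi_dsumW_apply, Matrix.fromBlocks_apply₁₁,
      Matrix.fromBlocks_apply₁₂, Matrix.fromBlocks_apply₂₁, Matrix.fromBlocks_apply₂₂,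
      Matrix.zero_apply, smul_zero, Finset.sum_const_zero, add_zero, zero_add] at h
    exact h
  · intro hIT
    refine ⟨hresp, ?_, ?_⟩
    · intro n n' a ha b hb
      have hab : dsum a b ∈ C (n + n') := hC.2.2 n n' a ha b hb
      have E1 : rmulR (f n a)
          ((Matrix.fromCols (1 : Matrix (Fin n) (Fin n) R)
            (0 : Matrix (Fin n) (Fin n') R)).submatrix id finSumFinEquiv.symm) =
          rmulL ((Matrix.fromCols (1 : Matrix (Fin n) (Fin n) R)
            (0 : Matrix (Fin n) (Fin n') R)).submatrix id finSumFinEquiv.symm)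
            (f (n + n') (dsum a b)) :=
        hIT n (n + n') _ a ha (dsum a b) hab
          (gi_grel_simAct hd _ _ _
            (gi_isUnit_map (gi_isUnit_uptri _))
            (gi_uptri_comm _ a (dsum a b) (fun i j => gi_comm_T1 (a i j) (b i j))))
      have E2 : rmulR (f (n + n') (dsum a b))
          ((Matrix.fromRows (0 : Matrix (Fin n) (Fin n') R)
            (1 : Matrix (Fin n') (Fin n') R)).submatrix finSumFinEquiv.symm id) =
          rmulL ((Matrix.fromRows (0 : Matrix (Fin n) (Fin n') R)
            (1 : Matrix (Fin n') (Fin n') R)).submatrix finSumFinEquiv.symm id)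
            (f n' b) :=
        hIT (n + n') n' _ (dsum a b) hab b hb
          (gi_grel_simAct hd _ _ _
            (gi_isUnit_map (gi_isUnit_uptri _))
            (gi_uptri_comm _ (dsum a b) b (fun i j => gi_comm_T2 (a i j) (b i j))))
      have E3 : rmulR (f (n + n') (dsum a b))
          ((Matrix.fromRows (1 : Matrix (Fin n) (Fin n) R)
            (0 : Matrix (Fin n') (Fin n) R)).submatrix finSumFinEquiv.symm id) =
          rmulL ((Matrix.fromRows (1 : Matrix (Fin n) (Fin n) R)
            (0 : Matrix (Fin n') (Fin n) R)).submatrix finSumFinEquiv.symm id)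
            (f n a) :=
        hIT (n + n') n _ (dsum a b) hab a ha
          (gi_grel_simAct hd _ _ _
            (gi_isUnit_map (gi_isUnit_uptri _))
            (gi_uptri_comm _ (dsum a b) a (fun i j => gi_comm_T3 (a i j) (b i j))))
      ext I J
      obtain ⟨x, rfl⟩ : ∃ x, finSumFinEquiv x = I := ⟨finSumFinEquiv.symm I, by simp⟩
      obtain ⟨y, rfl⟩ : ∃ y, finSumFinEquiv y = J := ⟨finSumFinEquiv.symm J, by simp⟩
      rw [gi_dsumW_apply]
      cases x with
      | inl i =>
        cases y with
        | inl j =>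
          have h := congrFun (congrFun E1 i) (finSumFinEquiv (Sum.inl j))
          simp only [rmulR, rmulL, Matrix.of_apply] at h
          rw [gi_sum_split] at h
          simp only [gi_colsub_apply, Matrix.fromCols_apply_inl,
            Matrix.fromCols_apply_inr, Matrix.zero_apply, zero_smul,
            Finset.sum_const_zero, add_zero, Matrix.one_apply, ite_smul, one_smul,
            Finset.sum_ite_eq', Finset.mem_univ, if_true] at h
          simpa [Matrix.fromBlocks_apply₁₁] using h.symm
        | inr j =>
          have h := congrFun (congrFun E1 i) (finSumFinEquiv (Sum.inr j))
          simp only [rmulR, rmulL, Matrix.of_apply] at h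
          rw [gi_sum_split] at h
          simp only [gi_colsub_apply, Matrix.fromCols_apply_inl,
            Matrix.fromCols_apply_inr, Matrix.zero_apply, zero_smul,
            Finset.sum_const_zero, add_zero, Matrix.one_apply, ite_smul, one_smul,
            Finset.sum_ite_eq', Finset.mem_univ, if_true] at h
          simpa [Matrix.fromBlocks_apply₁₂] using h.symm
      | inr i =>
        cases y with
        | inl j =>
          have h := congrFun (congrFun E3 (finSumFinEquiv (Sum.inr i))) j
          simp only [rmulR, rmulL, Matrix.of_apply] at h
          rw [gi_sum_split] at h
          simp only [gi_rowsub_apply, Matrix.fromRows_apply_inl,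
            Matrix.fromRows_apply_inr, Matrix.zero_apply, zero_smul,
            Finset.sum_const_zero, add_zero, zero_add, Matrix.one_apply, ite_smul,
            one_smul, Finset.sum_ite_eq', Finset.mem_univ, if_true] at h
          simpa [Matrix.fromBlocks_apply₂₁] using h
        | inr j =>
          have h := congrFun (congrFun E2 (finSumFinEquiv (Sum.inr i))) j
          simp only [rmulR, rmulL, Matrix.of_apply] at h
          rw [gi_sum_split] at h
          simp only [gi_rowsub_apply, Matrix.fromRows_apply_inl,
            Matrix.fromRows_apply_inr, Matrix.zero_apply, zero_smul,
            Finset.sum_const_zero, add_zero, zero_add, Matrix.one_apply, ite_smul,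
            one_smul, Finset.sum_ite_eq', Finset.mem_univ, if_true] at h
          simpa [Matrix.fromBlocks_apply₂₂] using h
    · intro n s a ha hsa
      have E : rmulR (f n (simAct (s : Matrix (Fin n) (Fin n) R) a))
            (s : Matrix (Fin n) (Fin n) R) =
          rmulL (s : Matrix (Fin n) (Fin n) R) (f n a) :=
        hIT n n (s : Matrix (Fin n) (Fin n) R)
          (simAct (s : Matrix (Fin n) (Fin n) R) a) hsa a ha
          (gi_grel_simAct hd _ _
            ((uptri R (1 : Matrix (Fin n) (Fin n) R)).map (algebraMap R A))
            (gi_isUnit_map (gi_isUnit_uptri _))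
            (gi_comm_sim (s : Matrix (Fin n) (Fin n) R) a))
      rw [← E, gi_rmulR_rmulR, Units.mul_inv, gi_rmulR_one]
end

section
/- Uniqueness of the restriction of an nc function to a similarity-invariant envelope: let Ω be an nc set over Gr^{(d;m)}(A) and let Ω̂ be its similarity-invariant envelope, Ω̂_n = {s·σ : s ∈ GL_n(R), σ ∈ Ω_n}. Then Ω̂ is an nc set over Gr^{(d;m)}(A) satisfying s·Ω̂_n = Ω̂_n for all s ∈ GL_n(R), and for every nc function f : Ω → M(B) there exists a unique nc function f̂ : Ω̂ → M(B) with f̂|_Ω = f. -/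
open Matrix

section EnvelopeAux

open Matrix

set_option maxHeartbeats 1000000

variable {R : Type} [CommRing R] {A : Type} [Ring A] [Algebra R A]

/-- The block-scalar embedding `Matrix (Fin n) (Fin n) R →+* BMat A m n`. -/
def sclHom (R : Type) [CommRing R] (A : Type) [Ring A] [Algebra R A] (m n : ℕ) :
    Matrix (Fin n) (Fin n) R →+* BMat A m n :=
  (Matrix.scalar (Fin m)).comp (algebraMap R A).mapMatrix

lemma simAct_eq {m n : ℕ} (s : Matrix (Fin n) (Fin n) R) (X : BMat A m n) :
    simAct s X = sclHom R A m n s * X := by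
  ext i j
  simp [simAct, sclHom, Matrix.scalar_apply, Matrix.diagonal_mul, RingHom.mapMatrix_apply]

lemma simAct_one {m n : ℕ} (X : BMat A m n) :
    simAct (R := R) (1 : Matrix (Fin n) (Fin n) R) X = X := by
  rw [simAct_eq, _root_.map_one, one_mul]

lemma simAct_simAct {m n : ℕ} (s t : Matrix (Fin n) (Fin n) R) (X : BMat A m n) :
    simAct s (simAct t X) = simAct (s * t) X := by
  rw [simAct_eq, simAct_eq, simAct_eq, _root_.map_mul, mul_assoc]

/-- The index equivalence `Fin (m-d) ⊕ Fin d ≃ Fin m`. -/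
def eqvH (m d : ℕ) (hd : d ≤ m) : (Fin (m - d) ⊕ Fin d) ≃ Fin m :=
  finSumFinEquiv.trans (finCongr (by omega))

lemma eqvH_inl {m d : ℕ} (hd : d ≤ m) (i : Fin (m - d)) :
    eqvH m d hd (Sum.inl i) = ⟨(i : ℕ), lt_of_lt_of_le i.isLt (Nat.sub_le m d)⟩ := by
  apply Fin.ext; simp [eqvH]

lemma eqvH_inr {m d : ℕ} (hd : d ≤ m) (j : Fin d) :
    eqvH m d hd (Sum.inr j) = ⟨m - d + (j : ℕ), by have := j.isLt; omega⟩ := by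
  apply Fin.ext; simp [eqvH]

/-- Transfer to a `Sum`-indexed block matrix. -/
def TB {A : Type} [Ring A] (m d : ℕ) (hd : d ≤ m) {n : ℕ} (Γ : BMat A m n) :
    Matrix (Fin (m - d) ⊕ Fin d) (Fin (m - d) ⊕ Fin d) (Mat A n) :=
  Γ.submatrix (eqvH m d hd) (eqvH m d hd)

lemma TB_mul {m d : ℕ} (hd : d ≤ m) {n : ℕ} (Γ Δ : BMat A m n) :
    TB m d hd (Γ * Δ) = TB m d hd Γ * TB m d hd Δ :=
  (Matrix.submatrix_mul_equiv Γ Δ _ (eqvH m d hd) _).symm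

lemma TB_one {m d : ℕ} (hd : d ≤ m) {n : ℕ} :
    TB m d hd (1 : BMat A m n) = 1 :=
  Matrix.submatrix_one_equiv _

lemma TB_blocks₁₁ {m d : ℕ} (hd : d ≤ m) {n : ℕ} (Γ : BMat A m n) :
    (TB m d hd Γ).toBlocks₁₁ = Matrix.of (fun i j : Fin (m - d) =>
      Γ ⟨(i : ℕ), lt_of_lt_of_le i.isLt (Nat.sub_le m d)⟩
        ⟨(j : ℕ), lt_of_lt_of_le j.isLt (Nat.sub_le m d)⟩) := by
  ext i j
  simp [TB, Matrix.toBlocks₁₁, eqvH_inl hd]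

lemma TB_blocks₂₂ {m d : ℕ} (hd : d ≤ m) {n : ℕ} (Γ : BMat A m n) :
    (TB m d hd Γ).toBlocks₂₂ = Matrix.of (fun i j : Fin d =>
      Γ ⟨m - d + (i : ℕ), by have := i.isLt; omega⟩
        ⟨m - d + (j : ℕ), by have := j.isLt; omega⟩) := by
  ext i j
  simp [TB, Matrix.toBlocks₂₂, eqvH_inr hd]

lemma TB_blocks₁₂_iff {m d : ℕ} (hd : d ≤ m) {n : ℕ} (Γ : BMat A m n) :
    (TB m d hd Γ).toBlocks₁₂ = 0 ↔
      (∀ i j : Fin m, (i : ℕ) < m - d → m - d ≤ (j : ℕ) → Γ i j = 0) := by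
  constructor
  · intro h i j hi hj
    have hj' : (j : ℕ) - (m - d) < d := by have := j.isLt; omega
    have h0 := congrFun (congrFun h ⟨(i : ℕ), hi⟩) ⟨(j : ℕ) - (m - d), hj'⟩
    simp only [Matrix.toBlocks₁₂, TB, Matrix.of_apply, Matrix.submatrix_apply,
      Matrix.zero_apply, eqvH_inl hd, eqvH_inr hd] at h0
    have ei : i = (⟨(i : ℕ), by omega⟩ : Fin m) := Fin.ext rfl
    have ej : j = (⟨m - d + ((j : ℕ) - (m - d)), by omega⟩ : Fin m) :=
      Fin.ext (by simp; omega)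
    rw [ei, ej]
    exact h0
  · intro h
    refine Matrix.ext fun i j => ?_
    simp only [Matrix.toBlocks₁₂, TB, Matrix.of_apply, Matrix.submatrix_apply,
      Matrix.zero_apply, eqvH_inl hd, eqvH_inr hd]
    exact h _ _ i.isLt (Nat.le_add_right _ _)

lemma memH_iff {m d n : ℕ} (hd : d ≤ m) (Γ : BMat A m n) :
    memH m d n hd Γ ↔ IsUnit Γ ∧ (TB m d hd Γ).toBlocks₁₂ = 0 ∧
      IsUnit (TB m d hd Γ).toBlocks₁₁ ∧ IsUnit (TB m d hd Γ).toBlocks₂₂ := by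
  rw [memH, TB_blocks₁₂_iff hd, TB_blocks₁₁ hd, TB_blocks₂₂ hd]

lemma memH_one {m d n : ℕ} (hd : d ≤ m) : memH m d n hd (1 : BMat A m n) := by
  rw [memH_iff hd]
  refine ⟨isUnit_one, ?_, ?_, ?_⟩ <;> rw [TB_one hd, ← Matrix.fromBlocks_one]
  · rw [Matrix.toBlocks_fromBlocks₁₂]
  · rw [Matrix.toBlocks_fromBlocks₁₁]; exact isUnit_one
  · rw [Matrix.toBlocks_fromBlocks₂₂]; exact isUnit_one

lemma memH_mul {m d n : ℕ} (hd : d ≤ m) {Γ Δ : BMat A m n}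
    (hΓ : memH m d n hd Γ) (hΔ : memH m d n hd Δ) : memH m d n hd (Γ * Δ) := by
  rw [memH_iff hd] at hΓ hΔ ⊢
  obtain ⟨h1, h2, h3, h4⟩ := hΓ
  obtain ⟨h1', h2', h3', h4'⟩ := hΔ
  set X₁ := (TB m d hd Γ).toBlocks₁₁ with hX₁
  set Y₁ := (TB m d hd Γ).toBlocks₂₁ with hY₁
  set Z₁ := (TB m d hd Γ).toBlocks₂₂ with hZ₁
  set X₂ := (TB m d hd Δ).toBlocks₁₁ with hX₂
  set Y₂ := (TB m d hd Δ).toBlocks₂₁ with hY₂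
  set Z₂ := (TB m d hd Δ).toBlocks₂₂ with hZ₂
  have eΓ : TB m d hd Γ = Matrix.fromBlocks X₁ 0 Y₁ Z₁ := by
    rw [hX₁, hY₁, hZ₁, ← h2]; exact (Matrix.fromBlocks_toBlocks _).symm
  have eΔ : TB m d hd Δ = Matrix.fromBlocks X₂ 0 Y₂ Z₂ := by
    rw [hX₂, hY₂, hZ₂, ← h2']; exact (Matrix.fromBlocks_toBlocks _).symm
  have e : TB m d hd (Γ * Δ) =
      Matrix.fromBlocks (X₁ * X₂) 0 (Y₁ * X₂ + Z₁ * Y₂) (Z₁ * Z₂) := by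
    rw [TB_mul hd, eΓ, eΔ, Matrix.fromBlocks_multiply]
    simp only [Matrix.mul_zero, Matrix.zero_mul, add_zero, zero_add]
  refine ⟨h1.mul h1', ?_, ?_, ?_⟩
  · rw [e, Matrix.toBlocks_fromBlocks₁₂]
  · rw [e, Matrix.toBlocks_fromBlocks₁₁]; exact h3.mul h3'
  · rw [e, Matrix.toBlocks_fromBlocks₂₂]; exact h4.mul h4'

lemma memH_inv {m d n : ℕ} (hd : d ≤ m) {Γ Δ : BMat A m n}
    (hΓ : memH m d n hd Γ) (hΓΔ : Γ * Δ = 1) (hΔΓ : Δ * Γ = 1) :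
    memH m d n hd Δ := by
  rw [memH_iff hd] at hΓ ⊢
  obtain ⟨h1, h2, h3, h4⟩ := hΓ
  obtain ⟨uX, huX⟩ := h3
  obtain ⟨uZ, huZ⟩ := h4
  set Y := (TB m d hd Γ).toBlocks₂₁ with hY
  have eΓ : TB m d hd Γ = Matrix.fromBlocks uX.val 0 Y uZ.val := by
    rw [huX, huZ, hY, ← h2]; exact (Matrix.fromBlocks_toBlocks _).symm
  have h5 : TB m d hd Γ *
      Matrix.fromBlocks ((uX⁻¹).val) 0 (-((uZ⁻¹).val * Y * (uX⁻¹).val)) ((uZ⁻¹).val) = 1 := by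
    rw [eΓ, Matrix.fromBlocks_multiply]
    rw [Matrix.mul_zero, Matrix.zero_mul, Matrix.mul_zero, Matrix.zero_mul,
      add_zero, add_zero, zero_add, Matrix.mul_neg, ← Matrix.mul_assoc,
      ← Matrix.mul_assoc, Units.mul_inv, Units.mul_inv, Matrix.one_mul,
      add_neg_cancel, Matrix.fromBlocks_one]
  have h6 : Matrix.fromBlocks ((uX⁻¹).val) 0 (-((uZ⁻¹).val * Y * (uX⁻¹).val)) ((uZ⁻¹).val) *
      TB m d hd Γ = 1 := by
    rw [eΓ, Matrix.fromBlocks_multiply]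
    rw [Matrix.mul_zero, Matrix.zero_mul, Matrix.mul_zero, Matrix.zero_mul,
      add_zero, add_zero, zero_add, Matrix.neg_mul, Matrix.mul_assoc,
      Units.inv_mul, Matrix.mul_one, neg_add_cancel, Units.inv_mul,
      Matrix.fromBlocks_one]
  have hTBΔ : TB m d hd Δ =
      Matrix.fromBlocks ((uX⁻¹).val) 0 (-((uZ⁻¹).val * Y * (uX⁻¹).val)) ((uZ⁻¹).val) := by
    have hleft : TB m d hd Δ * TB m d hd Γ = 1 := by rw [← TB_mul hd, hΔΓ, TB_one hd]
    exact left_inv_eq_right_inv hleft h5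
  refine ⟨⟨⟨Δ, Γ, hΔΓ, hΓΔ⟩, rfl⟩, ?_, ?_, ?_⟩
  · rw [hTBΔ, Matrix.toBlocks_fromBlocks₁₂]
  · rw [hTBΔ, Matrix.toBlocks_fromBlocks₁₁]; exact Units.isUnit _
  · rw [hTBΔ, Matrix.toBlocks_fromBlocks₂₂]; exact Units.isUnit _

lemma grel_refl {m d n : ℕ} (hd : d ≤ m) (x : BMat A m n) : grel m d n hd x x :=
  ⟨1, memH_one hd, (mul_one x).symm⟩

lemma grel_trans {m d n : ℕ} (hd : d ≤ m) {x y z : BMat A m n}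
    (h1 : grel m d n hd x y) (h2 : grel m d n hd y z) : grel m d n hd x z := by
  obtain ⟨Γ, hΓ, rfl⟩ := h1
  obtain ⟨Δ, hΔ, rfl⟩ := h2
  exact ⟨Δ * Γ, memH_mul hd hΔ hΓ, mul_assoc _ _ _⟩

lemma grel_symm {m d n : ℕ} (hd : d ≤ m) {x y : BMat A m n}
    (h : grel m d n hd x y) : grel m d n hd y x := by
  obtain ⟨Γ, hΓ, rfl⟩ := h
  obtain ⟨u, hu⟩ := hΓ.1
  refine ⟨(u⁻¹).val, memH_inv hd hΓ (by rw [← hu, Units.mul_inv])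
    (by rw [← hu, Units.inv_mul]), ?_⟩
  rw [mul_assoc, ← hu, Units.mul_inv, mul_one]

lemma grel_simAct {m d n : ℕ} (hd : d ≤ m) (s : Matrix (Fin n) (Fin n) R)
    {x y : BMat A m n} (h : grel m d n hd x y) :
    grel m d n hd (simAct s x) (simAct s y) := by
  obtain ⟨Γ, hΓ, rfl⟩ := h
  exact ⟨Γ, hΓ, by rw [simAct_eq, simAct_eq, mul_assoc]⟩

end EnvelopeAux

section EnvelopeAux2

open Matrix

variable {R : Type} [CommRing R] {A : Type} [Ring A] [Algebra R A]

lemma dsumMat_mul {n n' : ℕ} (X Y : Mat A n) (X' Y' : Mat A n') :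
    dsumMat X X' * dsumMat Y Y' = dsumMat (X * Y) (X' * Y') := by
  simp only [dsumMat, Matrix.reindex_apply, Matrix.submatrix_mul_equiv,
    Matrix.fromBlocks_multiply, Matrix.mul_zero, Matrix.zero_mul, add_zero, zero_add]

lemma dsumMat_one {n n' : ℕ} : dsumMat (1 : Mat A n) (1 : Mat A n') = 1 := by
  rw [dsumMat, Matrix.fromBlocks_one, Matrix.reindex_apply, Matrix.submatrix_one_equiv]

lemma dsumMat_zero {n n' : ℕ} : dsumMat (0 : Mat A n) (0 : Mat A n') = 0 := by
  refine Matrix.ext fun i j => ?_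
  rcases h : finSumFinEquiv.symm i with a | a <;> rcases h' : finSumFinEquiv.symm j with b | b <;>
    simp [dsumMat, Matrix.reindex_apply, Matrix.submatrix_apply, h, h']

lemma dsumMat_add {n n' : ℕ} (X Y : Mat A n) (X' Y' : Mat A n') :
    dsumMat (X + Y) (X' + Y') = dsumMat X X' + dsumMat Y Y' := by
  refine Matrix.ext fun i j => ?_
  rcases h : finSumFinEquiv.symm i with a | a <;> rcases h' : finSumFinEquiv.symm j with b | b <;>
    simp [dsumMat, Matrix.reindex_apply, Matrix.submatrix_apply, h, h', Matrix.add_apply]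

lemma dsumMat_sum {n n' : ℕ} {ι : Type} (s : Finset ι) (f : ι → Mat A n) (g : ι → Mat A n') :
    ∑ k ∈ s, dsumMat (f k) (g k) = dsumMat (∑ k ∈ s, f k) (∑ k ∈ s, g k) := by
  classical
  induction s using Finset.cons_induction with
  | empty => simp [dsumMat_zero]
  | cons i s hi ih => rw [Finset.sum_cons, Finset.sum_cons, Finset.sum_cons, ih, ← dsumMat_add]

lemma dsum_mul {m n n' : ℕ} (a b : BMat A m n) (a' b' : BMat A m n') :
    dsum a a' * dsum b b' = dsum (a * b) (a' * b') := by
  refine Matrix.ext fun i j => ?_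
  show ∑ k, dsumMat (a i k) (a' i k) * dsumMat (b k j) (b' k j) = _
  simp only [dsumMat_mul, dsumMat_sum]
  rfl

lemma dsum_one {m n n' : ℕ} : dsum (1 : BMat A m n) (1 : BMat A m n') = 1 := by
  refine Matrix.ext fun i j => ?_
  by_cases h : i = j
  · subst h
    show dsumMat ((1 : BMat A m n) i i) ((1 : BMat A m n') i i) = (1 : BMat A m (n + n')) i i
    rw [Matrix.one_apply_eq, Matrix.one_apply_eq, Matrix.one_apply_eq, dsumMat_one]
  · show dsumMat ((1 : BMat A m n) i j) ((1 : BMat A m n') i j) = (1 : BMat A m (n + n')) i j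
    rw [Matrix.one_apply_ne h, Matrix.one_apply_ne h, Matrix.one_apply_ne h, dsumMat_zero]

lemma isUnit_dsum {m n n' : ℕ} {a : BMat A m n} {b : BMat A m n'}
    (ha : IsUnit a) (hb : IsUnit b) : IsUnit (dsum a b) := by
  obtain ⟨u, hu⟩ := ha
  obtain ⟨v, hv⟩ := hb
  exact ⟨⟨dsum a b, dsum (u⁻¹).val (v⁻¹).val,
    by rw [dsum_mul, ← hu, ← hv, Units.mul_inv, Units.mul_inv, dsum_one],
    by rw [dsum_mul, ← hu, ← hv, Units.inv_mul, Units.inv_mul, dsum_one]⟩, rfl⟩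

lemma memH_dsum {m d n n' : ℕ} (hd : d ≤ m) {Γ : BMat A m n} {Γ' : BMat A m n'}
    (hΓ : memH m d n hd Γ) (hΓ' : memH m d n' hd Γ') :
    memH m d (n + n') hd (dsum Γ Γ') := by
  rw [memH_iff hd] at hΓ hΓ' ⊢
  refine ⟨isUnit_dsum hΓ.1 hΓ'.1, ?_, ?_, ?_⟩
  · refine Matrix.ext fun i j => ?_
    have e1 : (TB m d hd (dsum Γ Γ')).toBlocks₁₂ i j =
        dsumMat ((TB m d hd Γ).toBlocks₁₂ i j) ((TB m d hd Γ').toBlocks₁₂ i j) := rfl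
    rw [e1, hΓ.2.1, hΓ'.2.1, Matrix.zero_apply, Matrix.zero_apply, dsumMat_zero]
    rfl
  · rw [show (TB m d hd (dsum Γ Γ')).toBlocks₁₁ =
        dsum (TB m d hd Γ).toBlocks₁₁ (TB m d hd Γ').toBlocks₁₁ from rfl]
    exact isUnit_dsum hΓ.2.2.1 hΓ'.2.2.1
  · rw [show (TB m d hd (dsum Γ Γ')).toBlocks₂₂ =
        dsum (TB m d hd Γ).toBlocks₂₂ (TB m d hd Γ').toBlocks₂₂ from rfl]
    exact isUnit_dsum hΓ.2.2.2 hΓ'.2.2.2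

lemma dsumW_mulR {p q : ℕ} (s s' : Matrix (Fin p) (Fin p) R) (t t' : Matrix (Fin q) (Fin q) R) :
    dsumW s t * dsumW s' t' = dsumW (s * s') (t * t') := by
  simp only [dsumW, Matrix.reindex_apply, Matrix.submatrix_mul_equiv,
    Matrix.fromBlocks_multiply, Matrix.mul_zero, Matrix.zero_mul, add_zero, zero_add]

lemma dsumW_oneR {p q : ℕ} :
    dsumW (1 : Matrix (Fin p) (Fin p) R) (1 : Matrix (Fin q) (Fin q) R) = 1 := by
  rw [dsumW, Matrix.fromBlocks_one, Matrix.reindex_apply, Matrix.submatrix_one_equiv]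

/-- Direct sum of invertible scalar matrices, as a unit. -/
def dsumUnit {p q : ℕ} (s : (Matrix (Fin p) (Fin p) R)ˣ) (t : (Matrix (Fin q) (Fin q) R)ˣ) :
    (Matrix (Fin (p + q)) (Fin (p + q)) R)ˣ :=
  ⟨dsumW s.val t.val, dsumW (s⁻¹).val (t⁻¹).val,
    by rw [dsumW_mulR, Units.mul_inv, Units.mul_inv, dsumW_oneR],
    by rw [dsumW_mulR, Units.inv_mul, Units.inv_mul, dsumW_oneR]⟩

lemma dsumUnit_val {p q : ℕ} (s : (Matrix (Fin p) (Fin p) R)ˣ)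
    (t : (Matrix (Fin q) (Fin q) R)ˣ) : (dsumUnit s t).val = dsumW s.val t.val := rfl

lemma dsumUnit_inv_val {p q : ℕ} (s : (Matrix (Fin p) (Fin p) R)ˣ)
    (t : (Matrix (Fin q) (Fin q) R)ˣ) :
    ((dsumUnit s t)⁻¹).val = dsumW (s⁻¹).val (t⁻¹).val := rfl

lemma map_dsumW {p q : ℕ} (s : Matrix (Fin p) (Fin p) R) (t : Matrix (Fin q) (Fin q) R) :
    (dsumW s t).map (algebraMap R A) =
      dsumMat (s.map (algebraMap R A)) (t.map (algebraMap R A)) := by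
  rw [dsumW, dsumMat, Matrix.reindex_apply, Matrix.reindex_apply, ← Matrix.submatrix_map]
  rw [Matrix.fromBlocks_map, Matrix.map_zero _ (map_zero _), Matrix.map_zero _ (map_zero _)]

lemma simAct_dsum {m n n' : ℕ} (s : Matrix (Fin n) (Fin n) R) (t : Matrix (Fin n') (Fin n') R)
    (a : BMat A m n) (b : BMat A m n') :
    simAct (dsumW s t) (dsum a b) = dsum (simAct s a) (simAct t b) := by
  refine Matrix.ext fun i j => ?_
  show (dsumW s t).map (algebraMap R A) * dsumMat (a i j) (b i j) = _
  rw [map_dsumW, dsumMat_mul]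
  rfl

section RMul

variable {W : Type} [AddCommMonoid W] [Module R W]

lemma rmulL_one {p r : ℕ} (X : Matrix (Fin p) (Fin r) W) :
    rmulL (R := R) (1 : Matrix (Fin p) (Fin p) R) X = X := by
  refine Matrix.ext fun i j => ?_
  simp [rmulL, Matrix.one_apply, ite_smul]

lemma rmulR_one {p r : ℕ} (X : Matrix (Fin p) (Fin r) W) :
    rmulR (R := R) X (1 : Matrix (Fin r) (Fin r) R) = X := by
  refine Matrix.ext fun i j => ?_
  simp [rmulR, Matrix.one_apply, ite_smul]

lemma rmulL_rmulL {p q r u : ℕ} (s : Matrix (Fin p) (Fin q) R) (t : Matrix (Fin q) (Fin r) R)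
    (X : Matrix (Fin r) (Fin u) W) : rmulL s (rmulL t X) = rmulL (s * t) X := by
  refine Matrix.ext fun i j => ?_
  simp only [rmulL, Matrix.of_apply, Matrix.mul_apply, Finset.smul_sum, Finset.sum_smul,
    mul_smul]
  rw [Finset.sum_comm]

lemma rmulR_rmulR {p q r u : ℕ} (X : Matrix (Fin p) (Fin q) W) (s : Matrix (Fin q) (Fin r) R)
    (t : Matrix (Fin r) (Fin u) R) : rmulR (rmulR X s) t = rmulR X (s * t) := by
  refine Matrix.ext fun i j => ?_
  simp only [rmulR, Matrix.of_apply, Matrix.mul_apply, Finset.smul_sum, Finset.sum_smul,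
    smul_smul]
  rw [Finset.sum_comm]
  exact Finset.sum_congr rfl fun k _ => Finset.sum_congr rfl fun l _ => by rw [mul_comm]

lemma rmulL_rmulR {p q r u : ℕ} (s : Matrix (Fin p) (Fin q) R) (X : Matrix (Fin q) (Fin r) W)
    (t : Matrix (Fin r) (Fin u) R) : rmulL s (rmulR X t) = rmulR (rmulL s X) t := by
  refine Matrix.ext fun i j => ?_
  simp only [rmulL, rmulR, Matrix.of_apply, Finset.smul_sum, smul_smul]
  rw [Finset.sum_comm]
  exact Finset.sum_congr rfl fun k _ => Finset.sum_congr rfl fun l _ => by rw [mul_comm]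

lemma dsumW_cc {p q : ℕ} (P : Matrix (Fin p) (Fin p) W) (Q : Matrix (Fin q) (Fin q) W)
    (i j : Fin p) : dsumW P Q (Fin.castAdd q i) (Fin.castAdd q j) = P i j := by
  simp [dsumW, Matrix.reindex_apply, Matrix.submatrix_apply]

lemma dsumW_cn {p q : ℕ} (P : Matrix (Fin p) (Fin p) W) (Q : Matrix (Fin q) (Fin q) W)
    (i : Fin p) (j : Fin q) : dsumW P Q (Fin.castAdd q i) (Fin.natAdd p j) = 0 := by
  simp [dsumW, Matrix.reindex_apply, Matrix.submatrix_apply]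

lemma dsumW_nc {p q : ℕ} (P : Matrix (Fin p) (Fin p) W) (Q : Matrix (Fin q) (Fin q) W)
    (i : Fin q) (j : Fin p) : dsumW P Q (Fin.natAdd p i) (Fin.castAdd q j) = 0 := by
  simp [dsumW, Matrix.reindex_apply, Matrix.submatrix_apply]

lemma dsumW_nn {p q : ℕ} (P : Matrix (Fin p) (Fin p) W) (Q : Matrix (Fin q) (Fin q) W)
    (i j : Fin q) : dsumW P Q (Fin.natAdd p i) (Fin.natAdd p j) = Q i j := by
  simp [dsumW, Matrix.reindex_apply, Matrix.submatrix_apply]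

lemma rmulL_dsumW {p q : ℕ} (s : Matrix (Fin p) (Fin p) R) (t : Matrix (Fin q) (Fin q) R)
    (P : Matrix (Fin p) (Fin p) W) (Q : Matrix (Fin q) (Fin q) W) :
    rmulL (dsumW s t) (dsumW P Q) = dsumW (rmulL s P) (rmulL t Q) := by
  refine Matrix.ext fun i j => ?_
  obtain ⟨i, rfl⟩ := finSumFinEquiv.surjective i
  obtain ⟨j, rfl⟩ := finSumFinEquiv.surjective j
  show (∑ k, dsumW s t (finSumFinEquiv i) k • dsumW P Q k (finSumFinEquiv j)) = _
  rw [← Equiv.sum_comp finSumFinEquiv, Fintype.sum_sum_type]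
  rcases i with i | i <;> rcases j with j | j <;>
    simp [finSumFinEquiv_apply_left, finSumFinEquiv_apply_right,
      dsumW_cc, dsumW_cn, dsumW_nc, dsumW_nn, rmulL]

lemma rmulR_dsumW {p q : ℕ} (s : Matrix (Fin p) (Fin p) R) (t : Matrix (Fin q) (Fin q) R)
    (P : Matrix (Fin p) (Fin p) W) (Q : Matrix (Fin q) (Fin q) W) :
    rmulR (dsumW P Q) (dsumW s t) = dsumW (rmulR P s) (rmulR Q t) := by
  refine Matrix.ext fun i j => ?_
  obtain ⟨i, rfl⟩ := finSumFinEquiv.surjective i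
  obtain ⟨j, rfl⟩ := finSumFinEquiv.surjective j
  show (∑ k, dsumW s t k (finSumFinEquiv j) • dsumW P Q (finSumFinEquiv i) k) = _
  rw [← Equiv.sum_comp finSumFinEquiv, Fintype.sum_sum_type]
  rcases i with i | i <;> rcases j with j | j <;>
    simp [finSumFinEquiv_apply_left, finSumFinEquiv_apply_right,
      dsumW_cc, dsumW_cn, dsumW_nc, dsumW_nn, rmulR]

end RMul

end EnvelopeAux2

section EnvelopeAux3

open Matrix

variable {R : Type} [CommRing R] {A : Type} [Ring A] [Algebra R A]
  {W : Type} [AddCommMonoid W] [Module R W]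

lemma mem_envC_of_mem {m d : ℕ} {hd : d ≤ m} {C : ∀ n, Set (BMat A m n)} {n : ℕ}
    {a : BMat A m n} (ha : a ∈ C n) : a ∈ envC R hd C n :=
  ⟨1, a, ha, by rw [Units.val_one, simAct_one]; exact grel_refl hd a⟩

lemma grel_dsum_rep {m d n n' : ℕ} (hd : d ≤ m)
    {x a : BMat A m n} {y b : BMat A m n'}
    (s : (Matrix (Fin n) (Fin n) R)ˣ) (t : (Matrix (Fin n') (Fin n') R)ˣ)
    (hx : grel m d n hd x (simAct s.val a)) (hy : grel m d n' hd y (simAct t.val b)) :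
    grel m d (n + n') hd (dsum x y) (simAct (dsumUnit s t).val (dsum a b)) := by
  obtain ⟨Γ, hΓ, rfl⟩ := hx
  obtain ⟨Γ', hΓ', rfl⟩ := hy
  refine ⟨dsum Γ Γ', memH_dsum hd hΓ hΓ', ?_⟩
  rw [dsumUnit_val, simAct_dsum, dsum_mul]

lemma keyval {m d : ℕ} (hd : d ≤ m) {C : ∀ n, Set (BMat A m n)}
    (hC : IsNCSetCarrier hd C)
    {f : ∀ n, BMat A m n → Matrix (Fin n) (Fin n) W} (hf : IsNCFun R hd C f)
    {n : ℕ} {x : BMat A m n} {s t : (Matrix (Fin n) (Fin n) R)ˣ} {a b : BMat A m n}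
    (ha : a ∈ C n) (hb : b ∈ C n)
    (hxa : grel m d n hd x (simAct s.val a)) (hxb : grel m d n hd x (simAct t.val b)) :
    rmulR (rmulL s.val (f n a)) (s⁻¹).val = rmulR (rmulL t.val (f n b)) (t⁻¹).val := by
  obtain ⟨Γ, hΓ, hx1⟩ := hxa
  obtain ⟨Γ', hΓ', hx2⟩ := hxb
  obtain ⟨uΓ, huΓ⟩ := hΓ.1
  have e0 : sclHom R A m n s.val * a * Γ = sclHom R A m n t.val * b * Γ' := by
    rw [← simAct_eq, ← simAct_eq, ← hx1, ← hx2]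
  have e2 : sclHom R A m n s.val * a =
      sclHom R A m n t.val * b * (Γ' * (uΓ⁻¹).val) := by
    calc sclHom R A m n s.val * a
        = sclHom R A m n s.val * a * (uΓ.val * (uΓ⁻¹).val) := by
          rw [Units.mul_inv, mul_one]
      _ = sclHom R A m n s.val * a * Γ * (uΓ⁻¹).val := by rw [← mul_assoc, huΓ]
      _ = sclHom R A m n t.val * b * Γ' * (uΓ⁻¹).val := by rw [e0]
      _ = sclHom R A m n t.val * b * (Γ' * (uΓ⁻¹).val) := by rw [mul_assoc]
  have e1 : simAct (t⁻¹ * s : (Matrix (Fin n) (Fin n) R)ˣ).val a =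
      b * (Γ' * (uΓ⁻¹).val) := by
    rw [simAct_eq, Units.val_mul, _root_.map_mul, mul_assoc, e2, ← mul_assoc, ← mul_assoc,
      show sclHom R A m n ((t⁻¹ : (Matrix (Fin n) (Fin n) R)ˣ)).val *
          (sclHom R A m n t.val * b) = b by
        rw [← mul_assoc, ← _root_.map_mul, Units.inv_mul, _root_.map_one, one_mul],
      mul_assoc]
  have hmem : memH m d n hd (Γ' * (uΓ⁻¹).val) :=
    memH_mul hd hΓ' (memH_inv hd hΓ (by rw [← huΓ, Units.mul_inv])
      (by rw [← huΓ, Units.inv_mul]))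
  have hg : grel m d n hd (simAct (t⁻¹ * s : (Matrix (Fin n) (Fin n) R)ˣ).val a) b :=
    ⟨_, hmem, e1⟩
  have haC' : simAct (t⁻¹ * s : (Matrix (Fin n) (Fin n) R)ˣ).val a ∈ C n :=
    (hC.2.1 n _ b hg).mpr hb
  have ef : f n (simAct (t⁻¹ * s : (Matrix (Fin n) (Fin n) R)ˣ).val a) = f n b :=
    hf.1 n _ haC' b hb hg
  have es : f n (simAct (t⁻¹ * s : (Matrix (Fin n) (Fin n) R)ˣ).val a) =
      rmulR (rmulL (t⁻¹ * s : (Matrix (Fin n) (Fin n) R)ˣ).val (f n a))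
        (((t⁻¹ * s : (Matrix (Fin n) (Fin n) R)ˣ))⁻¹).val :=
    hf.2.2 n (t⁻¹ * s) a ha haC'
  have hu1 : t * (t⁻¹ * s) = s := by group
  have hu2 : (t⁻¹ * s)⁻¹ * t⁻¹ = s⁻¹ := by group
  rw [← ef, es, rmulL_rmulR, rmulL_rmulL, rmulR_rmulR, ← Units.val_mul, ← Units.val_mul,
    hu1, hu2]

end EnvelopeAux3

section EnvelopeAux4

open Matrix

/-- The canonical extension of an nc function to the similarity-invariant envelope. -/
noncomputable def gExt (R : Type) [CommRing R] {A : Type} [Ring A] [Algebra R A]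
    {W : Type} [AddCommMonoid W] [Module R W] {m d : ℕ} (hd : d ≤ m) (C : ∀ n, Set (BMat A m n))
    (f : ∀ n, BMat A m n → Matrix (Fin n) (Fin n) W) :
    ∀ n, BMat A m n → Matrix (Fin n) (Fin n) W := fun n x =>
  @dite (Matrix (Fin n) (Fin n) W) (x ∈ envC R hd C n) (Classical.dec _)
    (fun h =>
      let h' : ∃ (s : (Matrix (Fin n) (Fin n) R)ˣ) (a : BMat A m n),
          a ∈ C n ∧ grel m d n hd x (simAct (s : Matrix (Fin n) (Fin n) R) a) := h
      rmulR (R := R) (rmulL (R := R) (Exists.choose h').val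
        (f n (Exists.choose (Exists.choose_spec h')))) (((Exists.choose h')⁻¹).val))
    (fun _ => (0 : Matrix (Fin n) (Fin n) W))

lemma gExt_eq {R : Type} [CommRing R] {A : Type} [Ring A] [Algebra R A]
    {W : Type} [AddCommMonoid W] [Module R W] {m d : ℕ} (hd : d ≤ m) {C : ∀ n, Set (BMat A m n)}
    (hC : IsNCSetCarrier hd C)
    {f : ∀ n, BMat A m n → Matrix (Fin n) (Fin n) W} (hf : IsNCFun R hd C f)
    {n : ℕ} {x : BMat A m n} (s : (Matrix (Fin n) (Fin n) R)ˣ) {a : BMat A m n}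
    (ha : a ∈ C n) (hx : grel m d n hd x (simAct s.val a)) :
    gExt R hd C f n x = rmulR (rmulL s.val (f n a)) (s⁻¹).val := by
  have h : x ∈ envC R hd C n := ⟨s, a, ha, hx⟩
  have h' : ∃ (s : (Matrix (Fin n) (Fin n) R)ˣ) (a : BMat A m n),
      a ∈ C n ∧ grel m d n hd x (simAct (s : Matrix (Fin n) (Fin n) R) a) := h
  have h1 := Exists.choose_spec (Exists.choose_spec h')
  simp only [gExt]
  rw [dif_pos h]
  exact keyval hd hC hf h1.1 ha h1.2 hx

end EnvelopeAux4


/-- the similarity-invariant envelope is an nc set, is similarity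
invariant, and every nc function extends uniquely to it. -/
theorem envelope_extension {R : Type} [CommRing R] {A : Type} [Ring A] [Algebra R A]
    {W : Type} [AddCommMonoid W] [Module R W]
    (m d : ℕ) (hd1 : 1 ≤ d) (hd : d ≤ m)
    (C : ∀ n, Set (BMat A m n)) (hC : IsNCSetCarrier hd C)
    (f : ∀ n, BMat A m n → Matrix (Fin n) (Fin n) W) (hf : IsNCFun R hd C f) :
    IsNCSetCarrier hd (envC R hd C) ∧
    (∀ n (s : (Matrix (Fin n) (Fin n) R)ˣ) (x : BMat A m n),
      x ∈ envC R hd C n ↔ simAct (s : Matrix (Fin n) (Fin n) R) x ∈ envC R hd C n) ∧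
    (∃ g : ∀ n, BMat A m n → Matrix (Fin n) (Fin n) W,
      IsNCFun R hd (envC R hd C) g ∧ ∀ n, ∀ a ∈ C n, g n a = f n a) ∧
    (∀ g₁ g₂ : ∀ n, BMat A m n → Matrix (Fin n) (Fin n) W,
      IsNCFun R hd (envC R hd C) g₁ → IsNCFun R hd (envC R hd C) g₂ →
      (∀ n, ∀ a ∈ C n, g₁ n a = f n a) → (∀ n, ∀ a ∈ C n, g₂ n a = f n a) →
      ∀ n, ∀ x ∈ envC R hd C n, g₁ n x = g₂ n x) := by
  classical
  have hset : IsNCSetCarrier hd (envC R hd C) := by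
    refine ⟨?_, ?_, ?_⟩
    · rintro n a ⟨s, b, hb, Γ, hΓ, rfl⟩
      rw [simAct_eq]
      exact ((s.isUnit.map (sclHom R A m n)).mul (hC.1 n b hb)).mul hΓ.1
    · rintro n a b hab
      constructor
      · rintro ⟨s, c, hc, hac⟩
        exact ⟨s, c, hc, grel_trans hd (grel_symm hd hab) hac⟩
      · rintro ⟨s, c, hc, hbc⟩
        exact ⟨s, c, hc, grel_trans hd hab hbc⟩
    · rintro n n' a ⟨s, c, hc, hac⟩ b ⟨t, e, he, hbe⟩
      exact ⟨dsumUnit s t, dsum c e, hC.2.2 n n' c hc e he, grel_dsum_rep hd s t hac hbe⟩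
  have hfwd : ∀ n (s : (Matrix (Fin n) (Fin n) R)ˣ) (x : BMat A m n),
      x ∈ envC R hd C n → simAct (s : Matrix (Fin n) (Fin n) R) x ∈ envC R hd C n := by
    rintro n s x ⟨t, a, ha, hx⟩
    refine ⟨s * t, a, ha, ?_⟩
    rw [Units.val_mul, ← simAct_simAct]
    exact grel_simAct hd _ hx
  have hres : ∀ n, ∀ a ∈ C n, gExt R hd C f n a = f n a := by
    intro n a ha
    rw [gExt_eq hd hC hf 1 ha (by rw [Units.val_one, simAct_one]; exact grel_refl hd a),
      inv_one, Units.val_one, rmulL_one, rmulR_one]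
  refine ⟨hset, ?_, ⟨gExt R hd C f, ⟨?_, ?_, ?_⟩, hres⟩, ?_⟩
  · intro n s x
    refine ⟨hfwd n s x, fun h => ?_⟩
    have h2 := hfwd n s⁻¹ _ h
    rwa [simAct_simAct, ← Units.val_mul, inv_mul_cancel, Units.val_one, simAct_one] at h2
  · rintro n x hx y hy hxy
    obtain ⟨t, b, hb, hyb⟩ := hy
    rw [gExt_eq hd hC hf t hb (grel_trans hd hxy hyb), gExt_eq hd hC hf t hb hyb]
  · rintro n n' x hx y hy
    obtain ⟨s, a, ha, hxa⟩ := hx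
    obtain ⟨t, b, hb, hyb⟩ := hy
    rw [gExt_eq hd hC hf (dsumUnit s t) (hC.2.2 n n' a ha b hb)
        (grel_dsum_rep hd s t hxa hyb),
      gExt_eq hd hC hf s ha hxa, gExt_eq hd hC hf t hb hyb,
      hf.2.1 n n' a ha b hb, dsumUnit_val, dsumUnit_inv_val, rmulL_dsumW, rmulR_dsumW]
  · rintro n u x hx _
    obtain ⟨t, a, ha, hxa⟩ := hx
    have h2 : grel m d n hd (simAct (u : Matrix (Fin n) (Fin n) R) x)
        (simAct ((u * t : (Matrix (Fin n) (Fin n) R)ˣ) : Matrix (Fin n) (Fin n) R) a) := by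
      rw [Units.val_mul, ← simAct_simAct]
      exact grel_simAct hd _ hxa
    rw [gExt_eq hd hC hf (u * t) ha h2, gExt_eq hd hC hf t ha hxa,
      rmulL_rmulR, rmulL_rmulL, rmulR_rmulR, ← Units.val_mul, ← Units.val_mul, _root_.mul_inv_rev]
  · rintro g₁ g₂ hg₁ hg₂ hr₁ hr₂ n x hx
    obtain ⟨s, a, ha, hxa⟩ := hx
    have hxE : x ∈ envC R hd C n := ⟨s, a, ha, hxa⟩
    have haE : a ∈ envC R hd C n := mem_envC_of_mem ha
    have hsaE : simAct (s : Matrix (Fin n) (Fin n) R) a ∈ envC R hd C n :=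
      ⟨s, a, ha, grel_refl hd _⟩
    calc g₁ n x = g₁ n (simAct (s : Matrix (Fin n) (Fin n) R) a) :=
          hg₁.1 n x hxE _ hsaE hxa
      _ = rmulR (rmulL (s : Matrix (Fin n) (Fin n) R) (g₁ n a))
            ((s⁻¹ : (Matrix (Fin n) (Fin n) R)ˣ) : Matrix (Fin n) (Fin n) R) :=
          hg₁.2.2 n s a haE hsaE
      _ = rmulR (rmulL (s : Matrix (Fin n) (Fin n) R) (f n a))
            ((s⁻¹ : (Matrix (Fin n) (Fin n) R)ˣ) : Matrix (Fin n) (Fin n) R) := by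
          rw [hr₁ n a ha]
      _ = rmulR (rmulL (s : Matrix (Fin n) (Fin n) R) (g₂ n a))
            ((s⁻¹ : (Matrix (Fin n) (Fin n) R)ˣ) : Matrix (Fin n) (Fin n) R) := by
          rw [hr₂ n a ha]
      _ = g₂ n (simAct (s : Matrix (Fin n) (Fin n) R) a) :=
          (hg₂.2.2 n s a haE hsaE).symm
      _ = g₂ n x := (hg₂.1 n x hxE _ hsaE hxa).symm
end
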